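/- Let θ: A → B and ψ: B → C be *-homomorphisms between C*-algebras. Then dim_oz(ψ ∘ θ) + 1 ≤ (dim_oz(ψ) + 1)·(dim_oz(θ) + 1), where dim_oz denotes order zero dimension. -/

import Mathlib

/-- Complete positivity of a linear map between C*-algebras. -/
def IsCompletelyPositive {A B : Type*} [NonUnitalCStarAlgebra A] [NonUnitalCStarAlgebra B]
    (φ : A →ₗ[ℂ] B) : Prop :=
  ∀ (n : ℕ) (x : Matrix (Fin n) (Fin n) A), (∃ y : Matrix (Fin n) (Fin n) A, x = star y * y) →
    ∃ z : Matrix (Fin n) (Fin n) B, x.map φ = star z * z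

/-- A linear map between C*-algebras is order zero if it preserves orthogonality of
positive elements. -/
def IsOrderZero {A B : Type*} [NonUnitalCStarAlgebra A] [NonUnitalCStarAlgebra B]
    (φ : A →ₗ[ℂ] B) : Prop :=
  ∀ a b : A, (∃ x, a = star x * x) → (∃ y, b = star y * y) → a * b = 0 → φ a * φ b = 0

/-- `DimOzLE θ d` expresses that the *-homomorphism `θ : A → B` has order zero dimension
at most `d`: there are `d + 1` completely positive contractive order zero (approximately)
`A`-bimodule maps `B → A` whose sum is contractive and approximately splits `θ` on any
prescribed finite set.  (This is the finitary reformulation, via countable saturation of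
ultrapowers, of the existence of an exact splitting `B → ∏_U A` through the diagonal
embedding.) -/
def DimOzLE {A B : Type*} [NonUnitalCStarAlgebra A] [NonUnitalCStarAlgebra B]
    (θ : A →⋆ₙₐ[ℂ] B) (d : ℕ) : Prop :=
  ∀ (F : Finset A) (G : Finset B) (ε : ℝ), 0 < ε →
    ∃ ψ : Fin (d + 1) → (B →ₗ[ℂ] A),
      (∀ j, IsCompletelyPositive (ψ j) ∧ (∀ b, ‖ψ j b‖ ≤ ‖b‖) ∧ IsOrderZero (ψ j)) ∧
      (∀ b : B, ‖∑ j, ψ j b‖ ≤ ‖b‖) ∧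
      (∀ j, ∀ a ∈ F, ∀ b ∈ G,
        ‖ψ j (θ a * b) - a * ψ j b‖ ≤ ε ∧ ‖ψ j (b * θ a) - ψ j b * a‖ ≤ ε) ∧
      (∀ a ∈ F, ‖(∑ j, ψ j (θ a)) - a‖ ≤ ε)

lemma cp_pos {A B : Type*} [NonUnitalCStarAlgebra A] [NonUnitalCStarAlgebra B]
    (φ : A →ₗ[ℂ] B) (h : IsCompletelyPositive φ) {a : A} (ha : ∃ x, a = star x * x) :
    ∃ z, φ a = star z * z := by
  obtain ⟨x, hx⟩ := ha
  obtain ⟨Z, hZ⟩ := h 1 (Matrix.of fun _ _ => a) ⟨Matrix.of fun _ _ => x, by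
    ext i j
    simp [Matrix.mul_apply, Matrix.star_apply, Matrix.of_apply, Fin.sum_univ_one, hx]⟩
  refine ⟨Z 0 0, ?_⟩
  have := congrFun (congrFun hZ 0) 0
  simpa [Matrix.map_apply, Matrix.of_apply, Matrix.mul_apply, Matrix.star_apply, Fin.sum_univ_one] using this

lemma cp_comp {A B C : Type*} [NonUnitalCStarAlgebra A] [NonUnitalCStarAlgebra B]
    [NonUnitalCStarAlgebra C] (φ : A →ₗ[ℂ] B) (ψ : B →ₗ[ℂ] C)
    (hφ : IsCompletelyPositive φ) (hψ : IsCompletelyPositive ψ) :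
    IsCompletelyPositive (ψ.comp φ) := by
  intro n x hx
  obtain ⟨z, hz⟩ := hφ n x hx
  obtain ⟨w, hw⟩ := hψ n (x.map φ) ⟨z, hz⟩
  refine ⟨w, ?_⟩
  rw [← hw]
  ext i j
  simp [Matrix.map_apply]

lemma oz_comp {A B C : Type*} [NonUnitalCStarAlgebra A] [NonUnitalCStarAlgebra B]
    [NonUnitalCStarAlgebra C] (φ : A →ₗ[ℂ] B) (ψ : B →ₗ[ℂ] C)
    (hφCP : IsCompletelyPositive φ) (hφ : IsOrderZero φ) (hψ : IsOrderZero ψ) :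
    IsOrderZero (ψ.comp φ) := by
  intro a b ha hb hab
  exact hψ _ _ (cp_pos φ hφCP ha) (cp_pos φ hφCP hb) (hφ a b ha hb hab)

set_option maxHeartbeats 1000000 in
theorem dimOz_comp {A B C : Type*}
    [NonUnitalCStarAlgebra A] [NonUnitalCStarAlgebra B] [NonUnitalCStarAlgebra C]
    (θ : A →⋆ₙₐ[ℂ] B) (ψ : B →⋆ₙₐ[ℂ] C) (d e : ℕ)
    (hθ : DimOzLE θ d) (hψ : DimOzLE ψ e) :
    DimOzLE (ψ.comp θ) ((d + 1) * (e + 1) - 1) := by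
  classical
  intro F G ε hε
  obtain ⟨q, hq1, hq2, hq3, hq4⟩ := hψ (F.image θ) G (ε / 2) (by positivity)
  set G' : Finset B :=
    Finset.image (fun pr : Fin (e + 1) × C => q pr.1 pr.2) (Finset.univ ×ˢ G) with hG'
  obtain ⟨p, hp1, hp2, hp3, hp4⟩ := hθ F G' (ε / 2) (by positivity)
  have hm : (d + 1) * (e + 1) - 1 + 1 = (d + 1) * (e + 1) := by
    have h1 : 1 ≤ (d + 1) * (e + 1) := Nat.one_le_iff_ne_zero.mpr (by positivity)
    omega
  let E : Fin ((d + 1) * (e + 1) - 1 + 1) ≃ Fin (d + 1) × Fin (e + 1) :=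
    (finCongr hm).trans finProdFinEquiv.symm
  refine ⟨fun k => (p (E k).1).comp (q (E k).2), ?_, ?_, ?_, ?_⟩
  · intro k
    obtain ⟨hpCP, hpC, hpOZ⟩ := hp1 (E k).1
    obtain ⟨hqCP, hqC, hqOZ⟩ := hq1 (E k).2
    exact ⟨cp_comp _ _ hqCP hpCP,
      fun c => le_trans (hpC _) (hqC c),
      oz_comp _ _ hqCP hqOZ hpOZ⟩
  · -- sum over k equals double sum
    have key : ∀ c : C, ∑ k, (p (E k).1) ((q (E k).2) c) = ∑ i, p i (∑ j, q j c) := by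
      intro c
      calc ∑ k, (p (E k).1) ((q (E k).2) c)
          = ∑ ij : Fin (d + 1) × Fin (e + 1), p ij.1 (q ij.2 c) :=
            Equiv.sum_comp E (fun ij : Fin (d + 1) × Fin (e + 1) => p ij.1 (q ij.2 c))
        _ = ∑ i, ∑ j, p i (q j c) := Fintype.sum_prod_type _
        _ = ∑ i, p i (∑ j, q j c) :=
            Finset.sum_congr rfl fun i _ => (map_sum (p i) _ _).symm
    intro c
    simpa [key c] using le_trans (hp2 (∑ j, q j c)) (hq2 c)
  · intro k a ha c hc
    have hθa : θ a ∈ F.image θ := Finset.mem_image_of_mem θ ha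
    have hqjc : q (E k).2 c ∈ G' := by
      rw [hG']
      exact Finset.mem_image.mpr ⟨((E k).2, c),
        Finset.mem_product.mpr ⟨Finset.mem_univ _, hc⟩, rfl⟩
    obtain ⟨hpCP, hpC, hpOZ⟩ := hp1 (E k).1
    obtain ⟨hql, hqr⟩ := hq3 (E k).2 (θ a) hθa c hc
    obtain ⟨hpl, hpr⟩ := hp3 (E k).1 a ha (q (E k).2 c) hqjc
    constructor
    · have h1 : ‖p (E k).1 (q (E k).2 ((ψ.comp θ) a * c)) - p (E k).1 (θ a * q (E k).2 c)‖
          ≤ ε / 2 := by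
        rw [← map_sub]
        exact le_trans (hpC _) (by simpa using hql)
      calc ‖p (E k).1 (q (E k).2 ((ψ.comp θ) a * c)) - a * p (E k).1 (q (E k).2 c)‖
          = ‖(p (E k).1 (q (E k).2 ((ψ.comp θ) a * c)) - p (E k).1 (θ a * q (E k).2 c))
              + (p (E k).1 (θ a * q (E k).2 c) - a * p (E k).1 (q (E k).2 c))‖ := by
            rw [sub_add_sub_cancel]
        _ ≤ _ := norm_add_le _ _
        _ ≤ ε / 2 + ε / 2 := add_le_add h1 hpl
        _ = ε := by ring
    · have h1 : ‖p (E k).1 (q (E k).2 (c * (ψ.comp θ) a)) - p (E k).1 (q (E k).2 c * θ a)‖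
          ≤ ε / 2 := by
        rw [← map_sub]
        exact le_trans (hpC _) (by simpa using hqr)
      calc ‖p (E k).1 (q (E k).2 (c * (ψ.comp θ) a)) - p (E k).1 (q (E k).2 c) * a‖
          = ‖(p (E k).1 (q (E k).2 (c * (ψ.comp θ) a)) - p (E k).1 (q (E k).2 c * θ a))
              + (p (E k).1 (q (E k).2 c * θ a) - p (E k).1 (q (E k).2 c) * a)‖ := by
            rw [sub_add_sub_cancel]
        _ ≤ _ := norm_add_le _ _
        _ ≤ ε / 2 + ε / 2 := add_le_add h1 hpr
        _ = ε := by ring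
  · intro a ha
    have hθa : θ a ∈ F.image θ := Finset.mem_image_of_mem θ ha
    have key : ∑ k, (p (E k).1) ((q (E k).2) ((ψ.comp θ) a))
        = ∑ i, p i (∑ j, q j (ψ (θ a))) := by
      calc ∑ k, (p (E k).1) ((q (E k).2) ((ψ.comp θ) a))
          = ∑ ij : Fin (d + 1) × Fin (e + 1), p ij.1 (q ij.2 ((ψ.comp θ) a)) :=
            Equiv.sum_comp E (fun ij : Fin (d + 1) × Fin (e + 1) => p ij.1 (q ij.2 ((ψ.comp θ) a)))
        _ = ∑ i, ∑ j, p i (q j ((ψ.comp θ) a)) := Fintype.sum_prod_type _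
        _ = ∑ i, p i (∑ j, q j (ψ (θ a))) := by
            refine Finset.sum_congr rfl fun i _ => ?_
            rw [← map_sum (p i)]
            simp
    have h1 : ‖∑ i, p i (∑ j, q j (ψ (θ a))) - ∑ i, p i (θ a)‖ ≤ ε / 2 := by
      have : ∑ i, p i (∑ j, q j (ψ (θ a))) - ∑ i, p i (θ a)
          = ∑ i, p i ((∑ j, q j (ψ (θ a))) - θ a) := by
        rw [← Finset.sum_sub_distrib]
        exact Finset.sum_congr rfl fun i _ => (map_sub (p i) _ _).symm
      rw [this]
      exact le_trans (hp2 _) (hq4 (θ a) hθa)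
    have h2 : ‖∑ i, p i (θ a) - a‖ ≤ ε / 2 := hp4 a ha
    calc ‖(∑ k, (p (E k).1) ((q (E k).2) ((ψ.comp θ) a))) - a‖
        = ‖(∑ i, p i (∑ j, q j (ψ (θ a))) - ∑ i, p i (θ a)) + (∑ i, p i (θ a) - a)‖ := by
          rw [key, sub_add_sub_cancel]
      _ ≤ _ := norm_add_le _ _
      _ ≤ ε / 2 + ε / 2 := add_le_add h1 h2
      _ = ε := by ring
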